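/- Novelty is not necessary for transformativeness: for every nonempty experience σ : List A there exist a scientist M (for instance the ever-changing scientist M σ = σ.length taking values in ℕ) and an artefact a such that a is NOT novel in the situation (M, σ) (i.e., a ∈ content σ) yet a is transformative in (M, σ) (i.e., M σ ≠ M (σ ++ [a])). -/

import Mathlib

/-- The inspiring set (content) of an experience: the set of artefacts occurring in it. -/
def content {A : Type*} (σ : List A) : Set A := {a | a ∈ σ}

/-- Novelty is not necessary for transformativeness: for every nonempty experience
there are a scientist (e.g. the ever-changing one `M σ = σ.length`) and an artefact
that is not novel in the situation yet is transformative. -/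
theorem novelty_not_necessary_for_transformativeness
    {A : Type} (σ : List A) (hσ : σ ≠ []) :
    ∃ (M : List A → ℕ) (a : A),
      a ∈ content σ ∧ M σ ≠ M (σ ++ [a]) := by
  obtain ⟨x, xs, rfl⟩ := List.exists_cons_of_ne_nil hσ
  exact ⟨List.length, x, List.mem_cons_self (a := x) (l := xs), by simp⟩
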